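/- Consider the coupled Fokker–Planck model of a TCL population, where the net flux function g satisfies conditions (G1)–(G3), and the initial data f₁(·,0) = f₁^{b0} on [x̲(0), x̄(0)] and f₁(·,0) = f₁^{c0} on [x̄(0), x_H] are continuous and nonnegative, as are the initial data for f₀. Then the ON-state density is nonnegative for all time: f₁(x,t) ≥ 0 for all t ≥ 0 and all x ∈ [x̲(t), x_H]. -/

import Mathlib

open Set

/-- Right (one-sided) spatial derivative `∂_x f(x⁺, t)`. -/
noncomputable def rightD (f : ℝ → ℝ → ℝ) (x t : ℝ) : ℝ :=
  derivWithin (fun ξ => f ξ t) (Ici x) x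

/-- Left (one-sided) spatial derivative `∂_x f(x⁻, t)`. -/
noncomputable def leftD (f : ℝ → ℝ → ℝ) (x t : ℝ) : ℝ :=
  derivWithin (fun ξ => f ξ t) (Iic x) x


open Filter Topology

private lemma left_min_deriv_nonpos {f : ℝ → ℝ} {x₀ d : ℝ}
    (hd : HasDerivWithinAt f d (Iic x₀) x₀)
    (hmin : ∀ᶠ x in 𝓝[<] x₀, f x₀ ≤ f x) : d ≤ 0 := by
  have h1 := hasDerivWithinAt_iff_tendsto_slope.mp hd
  have hs : Iic x₀ \ {x₀} = Iio x₀ := by ext y; simp [lt_iff_le_and_ne]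
  rw [hs] at h1
  refine le_of_tendsto h1 ?_
  filter_upwards [hmin, self_mem_nhdsWithin] with y hy hy'
  have hy2 : y - x₀ < 0 := sub_neg.mpr hy'
  rw [slope_def_field]
  exact div_nonpos_of_nonneg_of_nonpos (by linarith) (by linarith)

private lemma right_min_deriv_nonneg {f : ℝ → ℝ} {x₀ d : ℝ}
    (hd : HasDerivWithinAt f d (Ici x₀) x₀)
    (hmin : ∀ᶠ x in 𝓝[>] x₀, f x₀ ≤ f x) : 0 ≤ d := by
  have h1 := hasDerivWithinAt_iff_tendsto_slope.mp hd
  have hs : Ici x₀ \ {x₀} = Ioi x₀ := by ext y; simp [lt_iff_le_and_ne, eq_comm]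
  rw [hs] at h1
  refine ge_of_tendsto h1 ?_
  filter_upwards [hmin, self_mem_nhdsWithin] with y hy hy'
  have hy2 : 0 < y - x₀ := sub_pos.mpr hy'
  rw [slope_def_field]
  exact div_nonneg (by linarith) (by linarith)

private lemma second_deriv_nonneg_at_min {f : ℝ → ℝ} {a b x₀ c : ℝ}
    (hx : x₀ ∈ Ioo a b)
    (hf : ∀ x ∈ Ioo a b, DifferentiableAt ℝ f x)
    (h2 : HasDerivAt (deriv f) c x₀)
    (hmin : ∀ x ∈ Ioo a b, f x₀ ≤ f x) : 0 ≤ c := by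
  by_contra hc
  push_neg at hc
  have hloc : IsLocalMin f x₀ := by
    filter_upwards [isOpen_Ioo.mem_nhds hx] with y hy using hmin y hy
  have hd0 : deriv f x₀ = 0 := hloc.deriv_eq_zero
  have hsl : Tendsto (slope (deriv f) x₀) (𝓝[>] x₀) (𝓝 c) :=
    (hasDerivAt_iff_tendsto_slope.mp h2).mono_left (nhdsWithin_mono _ (by
      intro y hy; simp only [mem_Ioi] at hy
      simp [ne_of_gt hy]))
  have hev : ∀ᶠ y in 𝓝[>] x₀, slope (deriv f) x₀ y < c / 2 :=
    hsl.eventually (eventually_lt_nhds (by linarith))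
  have hev2 : ∀ᶠ y in 𝓝[>] x₀, y ∈ Ioo a b :=
    eventually_nhdsWithin_of_eventually_nhds (isOpen_Ioo.mem_nhds hx)
  have hev3 : ∀ᶠ y in 𝓝[>] x₀, deriv f y < 0 ∧ y ∈ Ioo a b := by
    filter_upwards [hev, hev2, self_mem_nhdsWithin] with y h1 h2' h3
    refine ⟨?_, h2'⟩
    have hy : (0:ℝ) < y - x₀ := sub_pos.mpr h3
    rw [slope_def_field, hd0, sub_zero] at h1
    have := (div_lt_iff₀ hy).mp h1
    nlinarith
  obtain ⟨v, hv, hsub⟩ := mem_nhdsGT_iff_exists_Ioo_subset.mp hev3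
  set y₁ := (x₀ + v) / 2 with hy₁def
  have hxv : x₀ < v := hv
  have hy₁mem : y₁ ∈ Ioo x₀ v := ⟨by rw [hy₁def]; linarith, by rw [hy₁def]; linarith⟩
  have hy₁ab : y₁ ∈ Ioo a b := (hsub hy₁mem).2
  have hIccsub : Icc x₀ y₁ ⊆ Ioo a b := fun z hz =>
    ⟨lt_of_lt_of_le hx.1 hz.1, lt_of_le_of_lt hz.2 hy₁ab.2⟩
  have hanti : StrictAntiOn f (Icc x₀ y₁) := by
    refine strictAntiOn_of_deriv_neg (convex_Icc _ _) ?_ ?_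
    · exact fun z hz => (hf z (hIccsub hz)).continuousAt.continuousWithinAt
    · intro z hz
      rw [interior_Icc] at hz
      exact (hsub ⟨hz.1, lt_of_lt_of_le hz.2 (le_of_lt hy₁mem.2)⟩).1
  have : f y₁ < f x₀ := hanti ⟨le_refl _, le_of_lt hy₁mem.1⟩
    ⟨le_of_lt hy₁mem.1, le_refl _⟩ hy₁mem.1
  exact absurd (hmin y₁ hy₁ab) (not_le.mpr this)

private lemma g_lower_bound {g : ℝ → ℝ → ℝ}
    (hg : ContDiff ℝ 1 (fun p : ℝ × ℝ => g p.1 p.2))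
    (hG2 : ∀ s : ℝ, 0 ≤ g s 0)
    (hG3 : ∀ s τ : ℝ, |deriv (fun s' => g s' τ) s| + |deriv (fun τ' => g s τ') τ| ≤ 1) :
    ∀ s τ : ℝ, -|τ| ≤ g s τ := by
  intro s τ
  have hdiff : Differentiable ℝ (fun τ' => g s τ') := by
    have h1 : Differentiable ℝ (fun p : ℝ × ℝ => g p.1 p.2) := hg.differentiable one_ne_zero
    exact h1.comp (differentiable_const s |>.prodMk differentiable_id)
  have hlip : LipschitzWith 1 (fun τ' => g s τ') := by
    refine lipschitzWith_of_nnnorm_deriv_le hdiff ?_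
    intro x
    have := hG3 s x
    have h2 : |deriv (fun τ' => g s τ') x| ≤ 1 := by
      have := abs_nonneg (deriv (fun s' => g s' x) s); linarith
    simpa [← NNReal.coe_le_coe, nnnorm] using h2
  have := hlip.dist_le_mul τ 0
  simp only [NNReal.coe_one, one_mul, Real.dist_eq, sub_zero] at this
  have h3 := abs_le.mp this
  have := hG2 s
  linarith [h3.1]

private lemma compact_band {φ ψ : ℝ → ℝ} {T : ℝ}
    (hφ : ContinuousOn φ (Icc 0 T)) (hψ : ContinuousOn ψ (Icc 0 T))
    (hlt : ∀ t ∈ Icc 0 T, φ t < ψ t) :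
    IsCompact {p : ℝ × ℝ | p.2 ∈ Icc 0 T ∧ p.1 ∈ Icc (φ p.2) (ψ p.2)} := by
  have himg : {p : ℝ × ℝ | p.2 ∈ Icc 0 T ∧ p.1 ∈ Icc (φ p.2) (ψ p.2)} =
      (fun q : ℝ × ℝ => (φ q.2 + q.1 * (ψ q.2 - φ q.2), q.2)) '' (Icc 0 1 ×ˢ Icc 0 T) := by
    ext ⟨x, t⟩
    simp only [mem_setOf_eq, mem_image, mem_prod, mem_Icc, Prod.mk.injEq, Prod.exists]
    constructor
    · rintro ⟨⟨ht0, htT⟩, hx1, hx2⟩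
      have hd : 0 < ψ t - φ t := sub_pos.mpr (hlt t ⟨ht0, htT⟩)
      refine ⟨(x - φ t) / (ψ t - φ t), t, ⟨⟨div_nonneg (by linarith) hd.le, ?_⟩, ht0, htT⟩, ?_, rfl⟩
      · rw [div_le_one hd]; linarith
      · field_simp; ring
    · rintro ⟨s, t', ⟨⟨hs0, hs1⟩, ht0, htT⟩, rfl, rfl⟩
      have hd : 0 < ψ t' - φ t' := sub_pos.mpr (hlt t' ⟨ht0, htT⟩)
      refine ⟨⟨ht0, htT⟩, by nlinarith, by nlinarith⟩
  rw [himg]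
  refine (isCompact_Icc.prod isCompact_Icc).image_of_continuousOn ?_
  have h2 : ContinuousOn (fun q : ℝ × ℝ => q.2) (Icc (0:ℝ) 1 ×ˢ Icc 0 T) :=
    continuous_snd.continuousOn
  have hmap : MapsTo (fun q : ℝ × ℝ => q.2) (Icc (0:ℝ) 1 ×ˢ Icc 0 T) (Icc 0 T) :=
    fun q hq => hq.2
  exact ((hφ.comp h2 hmap).add (continuous_fst.continuousOn.mul
    ((hψ.comp h2 hmap).sub (hφ.comp h2 hmap)))).prodMk h2
set_option maxHeartbeats 1000000 in
/-- non-negativeness of the ON-state density: for the coupled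
Fokker–Planck model of a TCL population, with the net switching flux `g`
satisfying conditions (G1)–(G3) and nonnegative continuous initial data, the
ON-state density satisfies `f₁(x,t) ≥ 0` for all `t ≥ 0` and `x ∈ [x̲(t), x_H]`. -/
theorem on_state_nonneg
    (σ C R P xL xH : ℝ)
    (hσ : 0 < σ) (hC : 0 < C) (hR : 0 < R) (hP : 0 < P) (hLH : xL < xH)
    (xlo xhi u xa : ℝ → ℝ)
    (hu_cont : ContinuousOn u (Ici 0)) (hxa_cont : ContinuousOn xa (Ici 0))
    (hrange : ∀ t ≥ (0:ℝ), xL < xlo t ∧ xlo t < xhi t ∧ xhi t < xH)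
    (hxlo_deriv : ∀ t ≥ (0:ℝ), HasDerivAt xlo (u t) t)
    (hxhi_deriv : ∀ t ≥ (0:ℝ), HasDerivAt xhi (u t) t)
    (f₀ f₁ α₀ α₁ : ℝ → ℝ → ℝ) (g : ℝ → ℝ → ℝ)
    (hg : ContDiff ℝ 1 (fun p : ℝ × ℝ => g p.1 p.2))
    (hα₀ : ∀ x t, α₀ x t = (xa t - x) / (C * R))
    (hα₁ : ∀ x t, α₁ x t = (xa t - x - R * P) / (C * R))
    -- continuity up to the closures of the four space-time regions
    (hf₀_cont_a : ContinuousOn (fun p : ℝ × ℝ => f₀ p.1 p.2)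
      {p : ℝ × ℝ | 0 ≤ p.2 ∧ xL ≤ p.1 ∧ p.1 ≤ xlo p.2})
    (hf₀_cont_b : ContinuousOn (fun p : ℝ × ℝ => f₀ p.1 p.2)
      {p : ℝ × ℝ | 0 ≤ p.2 ∧ xlo p.2 ≤ p.1 ∧ p.1 ≤ xhi p.2})
    (hf₁_cont_b : ContinuousOn (fun p : ℝ × ℝ => f₁ p.1 p.2)
      {p : ℝ × ℝ | 0 ≤ p.2 ∧ xlo p.2 ≤ p.1 ∧ p.1 ≤ xhi p.2})
    (hf₁_cont_c : ContinuousOn (fun p : ℝ × ℝ => f₁ p.1 p.2)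
      {p : ℝ × ℝ | 0 ≤ p.2 ∧ xhi p.2 ≤ p.1 ∧ p.1 ≤ xH})
    -- spatial differentiability in the interiors of the regions
    (hf₀_x : ∀ t > (0:ℝ), ∀ x ∈ Ioo xL (xlo t) ∪ Ioo (xlo t) (xhi t),
      DifferentiableAt ℝ (fun ξ => f₀ ξ t) x)
    (hf₁_x : ∀ t > (0:ℝ), ∀ x ∈ Ioo (xlo t) (xhi t) ∪ Ioo (xhi t) xH,
      DifferentiableAt ℝ (fun ξ => f₁ ξ t) x)
    -- existence of the one-sided spatial derivatives (conditions (F2), (F3))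
    (hf₀_xL : ∀ t > (0:ℝ), DifferentiableWithinAt ℝ (fun ξ => f₀ ξ t) (Ici xL) xL)
    (hf₀_xloL : ∀ t > (0:ℝ), DifferentiableWithinAt ℝ (fun ξ => f₀ ξ t) (Iic (xlo t)) (xlo t))
    (hf₀_xloR : ∀ t > (0:ℝ), DifferentiableWithinAt ℝ (fun ξ => f₀ ξ t) (Ici (xlo t)) (xlo t))
    (hf₀_xhiL : ∀ t > (0:ℝ), DifferentiableWithinAt ℝ (fun ξ => f₀ ξ t) (Iic (xhi t)) (xhi t))
    (hf₁_xloR : ∀ t > (0:ℝ), DifferentiableWithinAt ℝ (fun ξ => f₁ ξ t) (Ici (xlo t)) (xlo t))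
    (hf₁_xhiL : ∀ t > (0:ℝ), DifferentiableWithinAt ℝ (fun ξ => f₁ ξ t) (Iic (xhi t)) (xhi t))
    (hf₁_xhiR : ∀ t > (0:ℝ), DifferentiableWithinAt ℝ (fun ξ => f₁ ξ t) (Ici (xhi t)) (xhi t))
    (hf₁_xH : ∀ t > (0:ℝ), DifferentiableWithinAt ℝ (fun ξ => f₁ ξ t) (Iic xH) xH)
    -- the four coupled Fokker–Planck equations
    (hpde_a : ∀ t > (0:ℝ), ∀ x ∈ Ioo xL (xlo t), ∃ Fx : ℝ,
      HasDerivAt (fun ξ => σ ^ 2 / 2 * deriv (fun ζ => f₀ ζ t) ξ - (α₀ ξ t - u t) * f₀ ξ t)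
        Fx x ∧
      HasDerivAt (fun τ => f₀ x τ) Fx t)
    (hpde_b0 : ∀ t > (0:ℝ), ∀ x ∈ Ioo (xlo t) (xhi t), ∃ Fx : ℝ,
      HasDerivAt (fun ξ => σ ^ 2 / 2 * deriv (fun ζ => f₀ ζ t) ξ - (α₀ ξ t - u t) * f₀ ξ t)
        Fx x ∧
      HasDerivAt (fun τ => f₀ x τ) (Fx - g (f₀ x t) (f₁ x t)) t)
    (hpde_b1 : ∀ t > (0:ℝ), ∀ x ∈ Ioo (xlo t) (xhi t), ∃ Fx : ℝ,
      HasDerivAt (fun ξ => σ ^ 2 / 2 * deriv (fun ζ => f₁ ζ t) ξ - (α₁ ξ t - u t) * f₁ ξ t)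
        Fx x ∧
      HasDerivAt (fun τ => f₁ x τ) (Fx + g (f₀ x t) (f₁ x t)) t)
    (hpde_c : ∀ t > (0:ℝ), ∀ x ∈ Ioo (xhi t) xH, ∃ Fx : ℝ,
      HasDerivAt (fun ξ => σ ^ 2 / 2 * deriv (fun ζ => f₁ ζ t) ξ - (α₁ ξ t - u t) * f₁ ξ t)
        Fx x ∧
      HasDerivAt (fun τ => f₁ x τ) Fx t)
    -- boundary conditions
    (hbcL : ∀ t > (0:ℝ), σ ^ 2 / 2 * rightD f₀ xL t = (α₀ xL t - u t) * f₀ xL t)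
    (hbc_jump_lo : ∀ t > (0:ℝ),
      leftD f₀ (xlo t) t = rightD f₀ (xlo t) t + rightD f₁ (xlo t) t)
    (hbc0_hi : ∀ t > (0:ℝ), f₀ (xhi t) t = 0)
    (hbc1_lo : ∀ t > (0:ℝ), f₁ (xlo t) t = 0)
    (hbc_jump_hi : ∀ t > (0:ℝ),
      rightD f₁ (xhi t) t = leftD f₀ (xhi t) t + leftD f₁ (xhi t) t)
    (hbcH : ∀ t > (0:ℝ), σ ^ 2 / 2 * leftD f₁ xH t = (α₁ xH t - u t) * f₁ xH t)
    -- fixed deadband width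
    (δ₀ : ℝ) (hδ₀ : 0 < δ₀) (hwidth : ∀ t ≥ (0:ℝ), xhi t - xlo t = δ₀)
    -- sign conditions at the deadband boundaries
    (hbc_sign1 : ∀ t > (0:ℝ), 0 < rightD f₁ (xlo t) t)
    (hbc_sign0 : ∀ t > (0:ℝ), leftD f₀ (xhi t) t < 0)
    -- conditions (G1)–(G3) on the net switching flux
    (hG1 : ∀ τ : ℝ, g 0 τ ≤ 0)
    (hG2 : ∀ s : ℝ, 0 ≤ g s 0)
    (hG3 : ∀ s τ : ℝ, |deriv (fun s' => g s' τ) s| + |deriv (fun τ' => g s τ') τ| ≤ 1)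
    -- nonnegative (continuous) initial data
    (hIC0 : ∀ x ∈ Icc xL (xhi 0), 0 ≤ f₀ x 0)
    (hIC1 : ∀ x ∈ Icc (xlo 0) xH, 0 ≤ f₁ x 0) :
    ∀ t ≥ (0:ℝ), ∀ x ∈ Icc (xlo t) xH, 0 ≤ f₁ x t := by
  intro T hT0 x₀ hx₀
  by_contra hneg
  push_neg at hneg
  rcases eq_or_lt_of_le hT0 with hT | hTpos
  · rw [← hT] at hx₀ hneg
    exact absurd (hIC1 x₀ hx₀) (not_le.mpr hneg)
  clear hT0
  -- continuity of the deadband boundaries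
  have hxlo_ct : ContinuousOn xlo (Icc 0 T) :=
    fun s hs => ((hxlo_deriv s hs.1).continuousAt).continuousWithinAt
  have hxhi_ct : ContinuousOn xhi (Icc 0 T) :=
    fun s hs => ((hxhi_deriv s hs.1).continuousAt).continuousWithinAt
  -- bounds on the coefficients
  obtain ⟨Mu, hMu⟩ := isCompact_Icc.exists_bound_of_continuousOn
    (hu_cont.mono (fun s (hs : s ∈ Icc (0:ℝ) T) => hs.1))
  obtain ⟨Ma, hMa⟩ := isCompact_Icc.exists_bound_of_continuousOn
    (hxa_cont.mono (fun s (hs : s ∈ Icc (0:ℝ) T) => hs.1))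
  have hCR : 0 < C * R := mul_pos hC hR
  obtain ⟨M, hMdef⟩ : ∃ M : ℝ, M = (Ma + (|xL| + |xH|) + R*P)/(C*R) + Mu := ⟨_, rfl⟩
  have hMb : ∀ ξ ∈ Icc xL xH, ∀ s ∈ Icc (0:ℝ) T, |α₁ ξ s - u s| ≤ M := by
    intro ξ hξ s hs
    have h1 : |xa s| ≤ Ma := by have := hMa s hs; rwa [Real.norm_eq_abs] at this
    have h2 : |u s| ≤ Mu := by have := hMu s hs; rwa [Real.norm_eq_abs] at this
    have h3 : |ξ| ≤ |xL| + |xH| := by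
      rw [abs_le]; constructor
      · have := neg_abs_le xL; have := abs_nonneg xH; linarith [hξ.1]
      · have := le_abs_self xH; have := abs_nonneg xL; linarith [hξ.2]
    rw [hα₁]
    have habs : |xa s - ξ - R*P| ≤ Ma + (|xL| + |xH|) + R*P := by
      have t1 : |xa s - ξ - R*P| ≤ |xa s - ξ| + |R*P| := by
        rw [sub_eq_add_neg (xa s - ξ)]
        exact (abs_add_le _ _).trans (by rw [abs_neg])
      have t2 : |xa s - ξ| ≤ |xa s| + |ξ| := by
        rw [sub_eq_add_neg]
        exact (abs_add_le _ _).trans (by rw [abs_neg])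
      have t3 : |R*P| = R*P := abs_of_pos (mul_pos hR hP)
      linarith
    have key : |(xa s - ξ - R*P)/(C*R) - u s| ≤ |xa s - ξ - R*P|/(C*R) + |u s| := by
      rw [sub_eq_add_neg]
      refine (abs_add_le _ _).trans ?_
      rw [abs_neg, abs_div, abs_of_pos hCR]
    have hdivle : |xa s - ξ - R*P|/(C*R) ≤ (Ma + (|xL| + |xH|) + R*P)/(C*R) := by
      gcongr
    rw [hMdef]
    linarith
  have hM0 : 0 ≤ M :=
    le_trans (abs_nonneg _) (hMb xL ⟨le_refl _, hLH.le⟩ 0 ⟨le_refl _, hTpos.le⟩)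
  have hσ2 : 0 < σ^2 := pow_pos hσ 2
  obtain ⟨K, hKdef⟩ : ∃ K : ℝ, K = 2*M/σ^2 + 1 := ⟨_, rfl⟩
  have hK1 : (1:ℝ) ≤ K := by
    have h1 : 0 ≤ 2*M/σ^2 := div_nonneg (by linarith) hσ2.le
    rw [hKdef]; linarith
  have hK0 : 0 < K := by linarith
  have hKM : σ^2*K/2 = M + σ^2/2 := by
    rw [hKdef]; field_simp
  obtain ⟨A, hAdef⟩ : ∃ A : ℝ, A = σ^2*K^2/2 + 1/(C*R) + M*K := ⟨_, rfl⟩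
  have hA0 : 0 ≤ A := by
    have h1 : 0 < 1/(C*R) := one_div_pos.mpr hCR
    have h2 : 0 ≤ σ^2*K^2 := mul_nonneg hσ2.le (sq_nonneg K)
    have h3 : 0 ≤ M*K := mul_nonneg hM0 hK0.le
    rw [hAdef]; linarith
  obtain ⟨β, hβdef⟩ : ∃ β : ℝ, β = A + 2 := ⟨_, rfl⟩
  -- existence of a minimum of the weighted density over the space-time region
  obtain ⟨xs, ts, htsIcc, hxsIcc1, hxsIcc2, hmin2, hWneg⟩ :
      ∃ xs ts, ts ∈ Icc (0:ℝ) T ∧ xlo ts ≤ xs ∧ xs ≤ xH ∧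
        (∀ ξ τ, τ ∈ Icc (0:ℝ) T → xlo τ ≤ ξ → ξ ≤ xH →
          Real.exp (-β*ts - K*xs) * f₁ xs ts ≤ Real.exp (-β*τ - K*ξ) * f₁ ξ τ) ∧
        Real.exp (-β*ts - K*xs) * f₁ xs ts < 0 := by
    have hSbcomp : IsCompact {p : ℝ×ℝ | p.2 ∈ Icc (0:ℝ) T ∧ p.1 ∈ Icc (xlo p.2) (xhi p.2)} :=
      compact_band hxlo_ct hxhi_ct (fun t ht => (hrange t ht.1).2.1)
    have hSccomp : IsCompact {p : ℝ×ℝ | p.2 ∈ Icc (0:ℝ) T ∧ p.1 ∈ Icc (xhi p.2) xH} :=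
      compact_band hxhi_ct continuousOn_const (fun t ht => (hrange t ht.1).2.2)
    have hWexp : Continuous (fun p : ℝ×ℝ => Real.exp (-β*p.2 - K*p.1)) := by fun_prop
    have hWb : ContinuousOn (fun p : ℝ×ℝ => Real.exp (-β*p.2 - K*p.1) * f₁ p.1 p.2)
        {p : ℝ×ℝ | p.2 ∈ Icc (0:ℝ) T ∧ p.1 ∈ Icc (xlo p.2) (xhi p.2)} :=
      hWexp.continuousOn.mul (hf₁_cont_b.mono (fun p hp => ⟨hp.1.1, hp.2.1, hp.2.2⟩))
    have hWc : ContinuousOn (fun p : ℝ×ℝ => Real.exp (-β*p.2 - K*p.1) * f₁ p.1 p.2)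
        {p : ℝ×ℝ | p.2 ∈ Icc (0:ℝ) T ∧ p.1 ∈ Icc (xhi p.2) xH} :=
      hWexp.continuousOn.mul (hf₁_cont_c.mono (fun p hp => ⟨hp.1.1, hp.2.1, hp.2.2⟩))
    obtain ⟨pb, hpbmem, hpbmin⟩ := hSbcomp.exists_isMinOn
      ⟨(xlo 0, 0), ⟨⟨le_refl _, hTpos.le⟩, le_refl _, (hrange 0 le_rfl).2.1.le⟩⟩ hWb
    obtain ⟨pc, hpcmem, hpcmin⟩ := hSccomp.exists_isMinOn
      ⟨(xhi 0, 0), ⟨⟨le_refl _, hTpos.le⟩, le_refl _, (hrange 0 le_rfl).2.2.le⟩⟩ hWc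
    have hpbmin' : ∀ q : ℝ × ℝ, q.2 ∈ Icc (0:ℝ) T → q.1 ∈ Icc (xlo q.2) (xhi q.2) →
        Real.exp (-β*pb.2 - K*pb.1) * f₁ pb.1 pb.2 ≤ Real.exp (-β*q.2 - K*q.1) * f₁ q.1 q.2 :=
      fun q h1 h2 => isMinOn_iff.mp hpbmin q ⟨h1, h2⟩
    have hpcmin' : ∀ q : ℝ × ℝ, q.2 ∈ Icc (0:ℝ) T → q.1 ∈ Icc (xhi q.2) xH →
        Real.exp (-β*pc.2 - K*pc.1) * f₁ pc.1 pc.2 ≤ Real.exp (-β*q.2 - K*q.1) * f₁ q.1 q.2 :=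
      fun q h1 h2 => isMinOn_iff.mp hpcmin q ⟨h1, h2⟩
    obtain ⟨h1b, h2b, h3b⟩ := hpbmem
    obtain ⟨h1c, h2c, h3c⟩ := hpcmem
    -- the bad point
    have hbad : Real.exp (-β*T - K*x₀) * f₁ x₀ T < 0 :=
      mul_neg_of_pos_of_neg (Real.exp_pos _) hneg
    have hcover : ∀ ξ τ, τ ∈ Icc (0:ℝ) T → xlo τ ≤ ξ → ξ ≤ xH →
        min (Real.exp (-β*pb.2 - K*pb.1) * f₁ pb.1 pb.2)
          (Real.exp (-β*pc.2 - K*pc.1) * f₁ pc.1 pc.2) ≤ Real.exp (-β*τ - K*ξ) * f₁ ξ τ := by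
      intro ξ τ hτ hl hr
      rcases le_total ξ (xhi τ) with h | h
      · exact le_trans (min_le_left _ _) (hpbmin' (ξ, τ) hτ ⟨hl, h⟩)
      · exact le_trans (min_le_right _ _) (hpcmin' (ξ, τ) hτ ⟨h, hr⟩)
    rcases le_total (Real.exp (-β*pb.2 - K*pb.1) * f₁ pb.1 pb.2)
        (Real.exp (-β*pc.2 - K*pc.1) * f₁ pc.1 pc.2) with h | h
    · refine ⟨pb.1, pb.2, h1b, h2b, le_trans h3b (hrange pb.2 h1b.1).2.2.le, ?_, ?_⟩
      · intro ξ τ hτ hl hr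
        have := hcover ξ τ hτ hl hr
        rw [min_eq_left h] at this
        exact this
      · have := hcover x₀ T ⟨hTpos.le, le_refl _⟩ hx₀.1 hx₀.2
        rw [min_eq_left h] at this
        exact lt_of_le_of_lt this hbad
    · refine ⟨pc.1, pc.2, h1c, le_trans (hrange pc.2 h1c.1).2.1.le h2c, h3c, ?_, ?_⟩
      · intro ξ τ hτ hl hr
        have := hcover ξ τ hτ hl hr
        rw [min_eq_right h] at this
        exact this
      · have := hcover x₀ T ⟨hTpos.le, le_refl _⟩ hx₀.1 hx₀.2
        rw [min_eq_right h] at this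
        exact lt_of_le_of_lt this hbad
  have hxrange := hrange ts htsIcc.1
  have hEpos : ∀ ξ τ : ℝ, 0 < Real.exp (-β*τ - K*ξ) := fun _ _ => Real.exp_pos _
  have hf₁neg : f₁ xs ts < 0 := by
    by_contra h
    push_neg at h
    have : 0 ≤ Real.exp (-β*ts - K*xs) * f₁ xs ts := mul_nonneg (hEpos xs ts).le h
    linarith
  rcases eq_or_lt_of_le htsIcc.1 with hts0 | htspos
  · have hx' : xs ∈ Icc (xlo 0) xH := by rw [hts0]; exact ⟨hxsIcc1, hxsIcc2⟩
    have h0 := hIC1 xs hx'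
    rw [hts0] at h0
    linarith
  -- from now on ts > 0
  have hminx : ∀ ξ, xlo ts ≤ ξ → ξ ≤ xH →
      Real.exp (-β*ts - K*xs) * f₁ xs ts ≤ Real.exp (-β*ts - K*ξ) * f₁ ξ ts :=
    fun ξ h1 h2 => hmin2 ξ ts htsIcc h1 h2
  -- derivatives of the exponential weight
  have hEx : ∀ (ξ τ : ℝ), HasDerivAt (fun ζ : ℝ => Real.exp (-β*τ - K*ζ))
      (-K * Real.exp (-β*τ - K*ξ)) ξ := by
    intro ξ τ
    have h1 : HasDerivAt (fun ζ : ℝ => -β*τ - K*ζ) (-K) ξ := by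
      simpa using ((hasDerivAt_id ξ).const_mul K).const_sub (-β*τ)
    simpa [mul_comm] using h1.exp
  have hEt : ∀ (ξ τ : ℝ), HasDerivAt (fun s : ℝ => Real.exp (-β*s - K*ξ))
      (-β * Real.exp (-β*τ - K*ξ)) τ := by
    intro ξ τ
    have h1 : HasDerivAt (fun s : ℝ => -β*s - K*ξ) (-β) τ := by
      simpa using ((hasDerivAt_id τ).const_mul (-β)).sub_const (K*ξ)
    simpa [mul_comm] using h1.exp
  -- time-derivative bound at the minimum point
  have timeD : ∀ D : ℝ, xlo ts < xs → HasDerivAt (fun τ => f₁ xs τ) D ts →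
      D ≤ β * f₁ xs ts := by
    intro D hlt hD
    have hW : HasDerivAt (fun τ => Real.exp (-β*τ - K*xs) * f₁ xs τ)
        (-β * Real.exp (-β*ts - K*xs) * f₁ xs ts + Real.exp (-β*ts - K*xs) * D) ts :=
      (hEt xs ts).mul hD
    have hev : ∀ᶠ τ in nhdsWithin ts (Iio ts),
        Real.exp (-β*ts - K*xs) * f₁ xs ts ≤ Real.exp (-β*τ - K*xs) * f₁ xs τ := by
      have hevlt : ∀ᶠ τ in nhds ts, xlo τ ∈ Iio xs :=
        (hxlo_deriv ts htsIcc.1).continuousAt (Iio_mem_nhds hlt)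
      have hIoo : Ioo (0:ℝ) ts ∈ nhdsWithin ts (Iio ts) :=
        Ioo_mem_nhdsLT_of_mem ⟨htspos, le_refl _⟩
      filter_upwards [hIoo, eventually_nhdsWithin_of_eventually_nhds hevlt] with τ hτ hτ2
      exact hmin2 xs τ ⟨hτ.1.le, le_trans hτ.2.le htsIcc.2⟩ (le_of_lt hτ2) hxsIcc2
    have h0 := left_min_deriv_nonpos hW.hasDerivWithinAt hev
    have hE := hEpos xs ts
    have h2 : Real.exp (-β*ts - K*xs) * D ≤ Real.exp (-β*ts - K*xs) * (β * f₁ xs ts) := by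
      nlinarith
    exact le_of_mul_le_mul_left h2 hE
  -- the interior contradiction
  have key : ∀ a b : ℝ, a < xs → xs < b → xlo ts ≤ a → b ≤ xH →
      (∀ ξ ∈ Ioo a b, DifferentiableAt ℝ (fun ζ => f₁ ζ ts) ξ) →
      ∀ Fx D : ℝ,
      HasDerivAt (fun ξ => σ^2/2 * deriv (fun ζ => f₁ ζ ts) ξ - (α₁ ξ ts - u ts) * f₁ ξ ts) Fx xs →
      HasDerivAt (fun τ => f₁ xs τ) D ts →
      Fx + f₁ xs ts ≤ D → False := by
    intro a b hab1 hab2 ha hb hdiff Fx D hFlux hD hFD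
    have hxsmem : xs ∈ Ioo a b := ⟨hab1, hab2⟩
    have hminI : ∀ ξ ∈ Ioo a b,
        (fun ζ => Real.exp (-β*ts - K*ζ) * f₁ ζ ts) xs ≤
        (fun ζ => Real.exp (-β*ts - K*ζ) * f₁ ζ ts) ξ :=
      fun ξ hξ => hminx ξ (le_trans ha hξ.1.le) (le_trans hξ.2.le hb)
    have hWslice : ∀ ξ ∈ Ioo a b, HasDerivAt (fun ζ => Real.exp (-β*ts - K*ζ) * f₁ ζ ts)
        (-K * Real.exp (-β*ts - K*ξ) * f₁ ξ ts +
          Real.exp (-β*ts - K*ξ) * deriv (fun ζ => f₁ ζ ts) ξ) ξ :=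
      fun ξ hξ => (hEx ξ ts).mul (hdiff ξ hξ).hasDerivAt
    have hloc : IsLocalMin (fun ζ => Real.exp (-β*ts - K*ζ) * f₁ ζ ts) xs := by
      filter_upwards [isOpen_Ioo.mem_nhds hxsmem] with y hy using hminI y hy
    have hd0 : deriv (fun ζ => Real.exp (-β*ts - K*ζ) * f₁ ζ ts) xs = 0 := hloc.deriv_eq_zero
    have hderW := (hWslice xs hxsmem).deriv
    rw [hd0] at hderW
    have hEps := hEpos xs ts
    have hf₁' : deriv (fun ζ => f₁ ζ ts) xs = K * f₁ xs ts := by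
      have h2 : Real.exp (-β*ts - K*xs) * (deriv (fun ζ => f₁ ζ ts) xs - K * f₁ xs ts) = 0 := by
        linear_combination -hderW
      rcases mul_eq_zero.mp h2 with h3 | h3
      · exact absurd h3 (ne_of_gt hEps)
      · linarith
    -- the drift coefficient and its derivative
    have hα : HasDerivAt (fun ξ => α₁ ξ ts - u ts) (-(1/(C*R))) xs := by
      have hfun : (fun ξ => α₁ ξ ts - u ts) = fun ξ => (xa ts - ξ - R*P)/(C*R) - u ts := by
        funext ξ; rw [hα₁]
      rw [hfun]
      have h1 : HasDerivAt (fun ξ : ℝ => (xa ts - ξ - R*P)/(C*R)) ((-1)/(C*R)) xs :=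
        (((hasDerivAt_id xs).const_sub (xa ts)).sub_const (R*P)).div_const (C*R)
      have h2 := h1.sub_const (u ts)
      have : (-1)/(C*R) = -(1/(C*R)) := by ring
      rwa [this] at h2
    have hGd : HasDerivAt (fun ξ => (α₁ ξ ts - u ts) * f₁ ξ ts)
        (-(1/(C*R)) * f₁ xs ts + (α₁ xs ts - u ts) * (K * f₁ xs ts)) xs := by
      have h1 := hα.mul (hdiff xs hxsmem).hasDerivAt
      rwa [hf₁'] at h1
    have hsum : HasDerivAt (fun ξ => σ^2/2 * deriv (fun ζ => f₁ ζ ts) ξ)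
        (Fx + (-(1/(C*R)) * f₁ xs ts + (α₁ xs ts - u ts) * (K * f₁ xs ts))) xs := by
      have h1 := hFlux.add hGd
      have hfe : (fun ξ => σ^2/2 * deriv (fun ζ => f₁ ζ ts) ξ) =
          fun ξ => (σ^2/2 * deriv (fun ζ => f₁ ζ ts) ξ - (α₁ ξ ts - u ts) * f₁ ξ ts) +
            (α₁ ξ ts - u ts) * f₁ ξ ts := by
        funext ξ; ring
      rw [hfe]
      exact h1
    have hd2 : HasDerivAt (fun ξ => deriv (fun ζ => f₁ ζ ts) ξ)
        (2/σ^2 * (Fx + (-(1/(C*R)) * f₁ xs ts + (α₁ xs ts - u ts) * (K * f₁ xs ts)))) xs := by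
      have h1 := hsum.const_mul (2/σ^2)
      have hfe : (fun ξ => 2/σ^2 * (σ^2/2 * deriv (fun ζ => f₁ ζ ts) ξ)) =
          fun ξ => deriv (fun ζ => f₁ ζ ts) ξ := by
        funext ξ
        have h0 : σ^2 ≠ 0 := ne_of_gt hσ2
        field_simp
      rwa [hfe] at h1
    -- second derivative of the weighted slice
    have hEE : HasDerivAt (fun ζ : ℝ => -K * Real.exp (-β*ts - K*ζ))
        (-K * (-K * Real.exp (-β*ts - K*xs))) xs := (hEx xs ts).const_mul (-K)
    have hterm1 : HasDerivAt (fun ζ => -K * Real.exp (-β*ts - K*ζ) * f₁ ζ ts)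
        (-K * (-K * Real.exp (-β*ts - K*xs)) * f₁ xs ts +
          -K * Real.exp (-β*ts - K*xs) * (K * f₁ xs ts)) xs := by
      have h1 := hEE.mul (hdiff xs hxsmem).hasDerivAt
      rwa [hf₁'] at h1
    have hterm2 : HasDerivAt (fun ζ => Real.exp (-β*ts - K*ζ) * deriv (fun ζ' => f₁ ζ' ts) ζ)
        (-K * Real.exp (-β*ts - K*xs) * deriv (fun ζ => f₁ ζ ts) xs +
          Real.exp (-β*ts - K*xs) *
            (2/σ^2 * (Fx + (-(1/(C*R)) * f₁ xs ts + (α₁ xs ts - u ts) * (K * f₁ xs ts))))) xs :=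
      (hEx xs ts).mul hd2
    have heq : (fun ζ => -K * Real.exp (-β*ts - K*ζ) * f₁ ζ ts +
        Real.exp (-β*ts - K*ζ) * deriv (fun ζ' => f₁ ζ' ts) ζ) =ᶠ[nhds xs]
        deriv (fun ζ => Real.exp (-β*ts - K*ζ) * f₁ ζ ts) := by
      filter_upwards [isOpen_Ioo.mem_nhds hxsmem] with ζ hζ
      exact ((hWslice ζ hζ).deriv).symm
    have hWd2 : HasDerivAt (deriv (fun ζ => Real.exp (-β*ts - K*ζ) * f₁ ζ ts))
        ((-K * (-K * Real.exp (-β*ts - K*xs)) * f₁ xs ts +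
          -K * Real.exp (-β*ts - K*xs) * (K * f₁ xs ts)) +
         (-K * Real.exp (-β*ts - K*xs) * deriv (fun ζ => f₁ ζ ts) xs +
          Real.exp (-β*ts - K*xs) *
            (2/σ^2 * (Fx + (-(1/(C*R)) * f₁ xs ts + (α₁ xs ts - u ts) * (K * f₁ xs ts)))))) xs :=
      (hterm1.add hterm2).congr_of_eventuallyEq heq.symm
    have hcnonneg := second_deriv_nonneg_at_min hxsmem
      (fun ξ hξ => (hWslice ξ hξ).differentiableAt) hWd2 hminI
    rw [hf₁'] at hcnonneg
    -- deduce Fx + G' ≥ (σ²/2) K² f₁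
    have hstep1 : K^2 * f₁ xs ts ≤
        2/σ^2 * (Fx + (-(1/(C*R)) * f₁ xs ts + (α₁ xs ts - u ts) * (K * f₁ xs ts))) := by
      have h' : Real.exp (-β*ts - K*xs) * (K^2 * f₁ xs ts) ≤
          Real.exp (-β*ts - K*xs) *
            (2/σ^2 * (Fx + (-(1/(C*R)) * f₁ xs ts + (α₁ xs ts - u ts) * (K * f₁ xs ts)))) := by
        nlinarith [hcnonneg]
      exact le_of_mul_le_mul_left h' hEps
    have hstep2 : σ^2/2 * (K^2 * f₁ xs ts) ≤
        Fx + (-(1/(C*R)) * f₁ xs ts + (α₁ xs ts - u ts) * (K * f₁ xs ts)) := by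
      have h1 := mul_le_mul_of_nonneg_left hstep1 (le_of_lt (half_pos hσ2))
      calc σ^2/2 * (K^2 * f₁ xs ts)
          ≤ σ^2/2 * (2/σ^2 * (Fx + (-(1/(C*R)) * f₁ xs ts +
              (α₁ xs ts - u ts) * (K * f₁ xs ts)))) := h1
        _ = Fx + (-(1/(C*R)) * f₁ xs ts + (α₁ xs ts - u ts) * (K * f₁ xs ts)) := by
            have h0 : σ^2 ≠ 0 := ne_of_gt hσ2
            field_simp
    -- bound the drift term
    have haα := abs_le.mp (hMb xs ⟨le_trans hxrange.1.le hxsIcc1, hxsIcc2⟩ ts htsIcc)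
    have hdrift : M * K * f₁ xs ts ≤ -((α₁ xs ts - u ts) * (K * f₁ xs ts)) := by
      nlinarith [mul_nonneg (mul_nonneg
        (by linarith [haα.1] : (0:ℝ) ≤ M + (α₁ xs ts - u ts)) hK0.le)
        (by linarith : (0:ℝ) ≤ -f₁ xs ts)]
    -- conclude Fx ≥ A f₁ and the contradiction
    have hFxA : A * f₁ xs ts ≤ Fx := by
      rw [hAdef]
      have h1 : 0 < 1/(C*R) := one_div_pos.mpr hCR
      nlinarith [hstep2, hdrift]
    have hDβ := timeD D (lt_of_le_of_lt ha hab1) hD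
    rw [hβdef] at hDβ
    nlinarith [hFxA, hFD, hDβ, hf₁neg]
  -- case analysis on the location of the minimum point
  rcases eq_or_lt_of_le hxsIcc1 with heq | hlt1
  · -- xs = xlo ts
    have h0 := hbc1_lo ts htspos
    rw [heq] at h0
    linarith
  rcases lt_trichotomy xs (xhi ts) with hcase | hcase | hcase
  · -- interior of the deadband region
    obtain ⟨Fx, hFlux, hTime⟩ := hpde_b1 ts htspos xs ⟨hlt1, hcase⟩
    refine key (xlo ts) (xhi ts) hlt1 hcase (le_refl _) hxrange.2.2.le
      (fun ξ hξ => hf₁_x ts htspos ξ (Or.inl hξ)) Fx _ hFlux hTime ?_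
    have hg1 := g_lower_bound hg hG2 hG3 (f₀ xs ts) (f₁ xs ts)
    have habs : |f₁ xs ts| = -(f₁ xs ts) := abs_of_neg hf₁neg
    rw [habs] at hg1
    linarith
  · -- xs = xhi ts : the interface
    subst hcase
    have hWL : HasDerivWithinAt (fun ξ => Real.exp (-β*ts - K*ξ) * f₁ ξ ts)
        (-K * Real.exp (-β*ts - K*(xhi ts)) * f₁ (xhi ts) ts +
          Real.exp (-β*ts - K*(xhi ts)) * leftD f₁ (xhi ts) ts) (Iic (xhi ts)) (xhi ts) :=
      ((hEx (xhi ts) ts).hasDerivWithinAt).mul (hf₁_xhiL ts htspos).hasDerivWithinAt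
    have hWR : HasDerivWithinAt (fun ξ => Real.exp (-β*ts - K*ξ) * f₁ ξ ts)
        (-K * Real.exp (-β*ts - K*(xhi ts)) * f₁ (xhi ts) ts +
          Real.exp (-β*ts - K*(xhi ts)) * rightD f₁ (xhi ts) ts) (Ici (xhi ts)) (xhi ts) :=
      ((hEx (xhi ts) ts).hasDerivWithinAt).mul (hf₁_xhiR ts htspos).hasDerivWithinAt
    have hL := left_min_deriv_nonpos hWL (by
      have hIoo : Ioo (xlo ts) (xhi ts) ∈ nhdsWithin (xhi ts) (Iio (xhi ts)) :=
        Ioo_mem_nhdsLT_of_mem ⟨hlt1, le_refl _⟩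
      filter_upwards [hIoo] with ξ hξ
      exact hminx ξ hξ.1.le (le_of_lt (lt_of_lt_of_le hξ.2 hxsIcc2)))
    have hR := right_min_deriv_nonneg hWR (by
      have hIoo : Ioo (xhi ts) xH ∈ nhdsWithin (xhi ts) (Ioi (xhi ts)) :=
        Ioo_mem_nhdsGT_of_mem ⟨le_refl _, hxrange.2.2⟩
      filter_upwards [hIoo] with ξ hξ
      exact hminx ξ (le_trans hxsIcc1 hξ.1.le) hξ.2.le)
    have hjump := hbc_jump_hi ts htspos
    have hsgn := hbc_sign0 ts htspos
    have hE := hEpos (xhi ts) ts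
    rw [hjump] at hR
    have h6 : Real.exp (-β*ts - K*(xhi ts)) * leftD f₀ (xhi ts) ts < 0 :=
      mul_neg_of_pos_of_neg hE hsgn
    ring_nf at hL hR h6
    linarith
  · -- above the deadband
    rcases eq_or_lt_of_le hxsIcc2 with heq2 | hlt2
    · -- xs = xH : Robin boundary
      subst heq2
      have hWL : HasDerivWithinAt (fun ξ => Real.exp (-β*ts - K*ξ) * f₁ ξ ts)
          (-K * Real.exp (-β*ts - K*xs) * f₁ xs ts +
            Real.exp (-β*ts - K*xs) * leftD f₁ xs ts) (Iic xs) xs :=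
        ((hEx xs ts).hasDerivWithinAt).mul (hf₁_xH ts htspos).hasDerivWithinAt
      have hL := left_min_deriv_nonpos hWL (by
        have hIoo : Ioo (xlo ts) xs ∈ nhdsWithin xs (Iio xs) :=
          Ioo_mem_nhdsLT_of_mem ⟨hlt1, le_refl _⟩
        filter_upwards [hIoo] with ξ hξ
        exact hminx ξ hξ.1.le (le_of_lt (lt_of_lt_of_le hξ.2 hxsIcc2)))
      have hrob := hbcH ts htspos
      have haα := abs_le.mp (hMb xs ⟨le_trans hxrange.1.le hxsIcc1, hxsIcc2⟩ ts htsIcc)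
      have hE := hEpos xs ts
      -- from hL : leftD ≤ K f₁
      have h1 : Real.exp (-β*ts - K*xs) * leftD f₁ xs ts ≤
          Real.exp (-β*ts - K*xs) * (K * f₁ xs ts) := by
        ring_nf at hL ⊢
        linarith
      have h2 : leftD f₁ xs ts ≤ K * f₁ xs ts := le_of_mul_le_mul_left h1 hE
      -- σ²/2 * leftD = (α₁ - u) f₁ ≥ M f₁  (since α₁ - u ≤ M and f₁ < 0)
      have h3 : M * f₁ xs ts ≤ σ^2/2 * leftD f₁ xs ts := by
        rw [hrob]
        nlinarith [mul_nonneg (sub_nonneg.mpr haα.2) (le_of_lt (neg_pos.mpr hf₁neg))]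
      -- combine: M f₁ ≤ σ²/2 K f₁ = (M + σ²/2) f₁ ⇒ 0 ≤ f₁, contradiction
      have h4 : σ^2/2 * leftD f₁ xs ts ≤ σ^2/2 * (K * f₁ xs ts) :=
        mul_le_mul_of_nonneg_left h2 (half_pos hσ2).le
      have h5 : σ^2/2 * (K * f₁ xs ts) = (M + σ^2/2) * f₁ xs ts := by
        have hh : σ^2/2 * K = M + σ^2/2 := by rw [← hKM]; ring
        rw [← hh]; ring
      rw [h5] at h4
      have h7 : σ^2/2 * f₁ xs ts < 0 := mul_neg_of_pos_of_neg (half_pos hσ2) hf₁neg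
      ring_nf at h3 h4 h7
      linarith
    · obtain ⟨Fx, hFlux, hTime⟩ := hpde_c ts htspos xs ⟨hcase, hlt2⟩
      exact key (xhi ts) xH hcase hlt2 hxrange.2.1.le (le_refl _)
        (fun ξ hξ => hf₁_x ts htspos ξ (Or.inr hξ)) Fx _ hFlux hTime (by linarith)
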